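/- arXiv:1410.1017 — 3 statements merged into one kernel-verified Lean document; each statement's English description precedes it below -/
import Mathlib

section
/- If x is a computable real number that is not algebraic and its irrationality exponent is finite, then its irrationality exponent is right-computably enumerable in 0', i.e., the set of rational b for which only finitely many rationals p/q satisfy |x − p/q| < 1/q^b is computably enumerable with oracle 0'. -/
/-- A real number is computable if there is a computable sequence of rationals `(r_j)` with
`|x - r_j| < 2^{-j}` for all `j`. -/
def IsComputableReal (x : ℝ) : Prop :=
  ∃ r : ℕ → ℚ, Computable r ∧ ∀ j : ℕ, |x - (r j : ℝ)| < (2 : ℝ)⁻¹ ^ j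

/-- A predicate on rationals is computably enumerable in the halting oracle `0'` if and only
if it is `Σ⁰₂`, i.e. of the form `∃ k ∀ m, R b k m` with computable matrix `R`.  We take
this characterization as the definition. -/
def RePredInZeroJump (S : ℚ → Prop) : Prop :=
  ∃ R : ℚ → ℕ → ℕ → Bool,
    Computable (fun p : ℚ × ℕ × ℕ => R p.1 p.2.1 p.2.2) ∧
    ∀ b, S b ↔ ∃ k, ∀ m, R b k m = true

open Encodable Denumerable

namespace RceAux




/-- step of Euclid's algorithm -/
def gstep : ℕ × ℕ → ℕ × ℕ := fun w => if w.1 = 0 then (0, w.2) else (w.2 % w.1, w.1)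

def gcdf : ℕ × ℕ → ℕ := fun w => (gstep^[w.1] w).2

theorem gcdf_aux : ∀ k x y, x ≤ k → (gstep^[k] (x, y)).2 = Nat.gcd x y := by
  intro k
  induction k with
  | zero => intro x y hx; interval_cases x; simp
  | succ k ih =>
    intro x y hx
    rcases Nat.eq_zero_or_pos x with h | h
    · subst h
      have : gstep (0, y) = (0, y) := by simp [gstep]
      rw [Function.iterate_fixed this]
      simp
    · rw [Function.iterate_succ_apply]
      have hg : gstep (x, y) = (y % x, x) := by simp [gstep, Nat.pos_iff_ne_zero.mp h]
      have hlt := Nat.mod_lt y h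
      rw [hg, ih _ _ (by omega : y % x ≤ k)]
      exact (Nat.gcd_rec x y).symm

theorem gcdf_eq (w : ℕ × ℕ) : gcdf w = Nat.gcd w.1 w.2 := gcdf_aux w.1 w.1 w.2 le_rfl

theorem gcdf_eq' (x y : ℕ) : gcdf (x, y) = Nat.gcd x y := gcdf_eq (x, y)

def pw : ℕ × ℕ → ℕ := fun w => (· * w.1)^[w.2] 1

theorem pw_eq (w : ℕ × ℕ) : pw w = w.1 ^ w.2 := by
  obtain ⟨a, b⟩ := w
  induction b with
  | zero => simp [pw]
  | succ b ih =>
    simp only [pw, Function.iterate_succ_apply'] at ih ⊢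
    rw [ih, pow_succ]

theorem primrec_gstep : Primrec gstep :=
  Primrec.ite (Primrec.eq.comp .fst (.const 0))
    (Primrec.pair (.const 0) .snd)
    (Primrec.pair (Primrec.nat_mod.comp .snd .fst) .fst)

theorem primrec_gcdf : Primrec gcdf :=
  Primrec.snd.comp <|
    (Primrec.nat_iterate .fst .id (primrec_gstep.comp .snd).to₂)

theorem primrec_pw : Primrec pw :=
  Primrec.nat_iterate Primrec.snd (.const 1)
    ((Primrec.nat_mul.comp .snd (Primrec.fst.comp .fst)).to₂)



theorem primrec_count {p : ℕ → Prop} [DecidablePred p]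
    (hp : Primrec fun y => decide (p y)) : Primrec (Nat.count p) := by
  have h : Primrec (Nat.rec (motive := fun _ => ℕ) 0
      (fun y ih => ih + cond (decide (p y)) 1 0)) := by
    refine Primrec.nat_rec₁ 0 ?_
    exact (Primrec.nat_add.comp .snd
      (Primrec.cond (hp.comp .fst) (.const 1) (.const 0))).to₂
  refine h.of_eq fun n => ?_
  induction n with
  | zero => simp
  | succ n ih => rw [Nat.count_succ, ← ih]; by_cases hpn : p n <;> simp [hpn]

theorem computable_nth {p : ℕ → Prop} [DecidablePred p]
    (hp : Primrec fun y => decide (p y)) (hinf : (setOf p).Infinite) :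
    Computable (Nat.nth p) := by
  have hF : Computable₂ fun n y => (decide (p y) && decide (Nat.count p y = n)) := by
    refine Primrec₂.to_comp ?_
    exact (Primrec.dom_bool₂ _).comp₂ (hp.comp .snd).to₂
      (PrimrecPred.decide (Primrec.eq.comp ((primrec_count hp).comp .snd) .fst)).to₂
  have hpart : Partrec fun n =>
      Nat.rfind fun y => Part.some (decide (p y) && decide (Nat.count p y = n)) := by
    have := Partrec.rfind (p := fun n y =>
      (Part.some (decide (p y) && decide (Nat.count p y = n)) : Part Bool)) hF.partrec₂
    exact this
  refine hpart.of_eq_tot fun n => ?_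
  apply Nat.mem_rfind.mpr
  constructor
  · simp only [Part.mem_some_iff]
    symm
    rw [Bool.and_eq_true, decide_eq_true_iff, decide_eq_true_iff]
    exact ⟨Nat.nth_mem_of_infinite hinf n, Nat.count_nth_of_infinite hinf n⟩
  · intro m hm
    simp only [Part.mem_some_iff]
    symm
    refine Bool.eq_false_iff.mpr fun hc => ?_
    rw [Bool.and_eq_true, decide_eq_true_iff, decide_eq_true_iff] at hc
    obtain ⟨h1, h2⟩ := hc
    have : Nat.nth p (Nat.count p m) = m := Nat.nth_count h1
    rw [h2] at this
    omega



/-- the base (sigma-type) encoding of `ℚ` -/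
def E0 : ℚ → ℕ := @Encodable.encode ℚ Rat.instEncodable

theorem E0_eq (b : ℚ) : E0 b = Nat.pair (Encodable.encode b.num) b.den := rfl

theorem E0_injective : Function.Injective E0 :=
  @Encodable.encode_injective ℚ Rat.instEncodable

def P : ℕ → Prop := fun y => y ∈ Set.range (@Encodable.encode ℚ Rat.instEncodable)

instance : DecidablePred P := @Encodable.decidableRangeEncode ℚ Rat.instEncodable

theorem P_E0 (b : ℚ) : P (E0 b) := ⟨b, rfl⟩

theorem P_infinite : (setOf P).Infinite := by
  have : Set.range E0 = setOf P := rfl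
  rw [← this]
  exact Set.infinite_range_of_injective E0_injective

/-- key: the `Primcodable`/`Denumerable` encoding of `ℚ` is the rank of `E0` -/
theorem encodeQ_eq (b : ℚ) :
    @Encodable.encode ℚ Primcodable.toEncodable b = Nat.count P (E0 b) := rfl

theorem nth_encodeQ (b : ℚ) :
    Nat.nth P (@Encodable.encode ℚ Primcodable.toEncodable b) = E0 b := by
  rw [encodeQ_eq]
  exact Nat.nth_count (P_E0 b)

/-- absolute value of the integer with encoding `u` -/
def zabs (u : ℕ) : ℕ := u / 2 + u % 2

theorem encode_int_ofNat (n : ℕ) : Encodable.encode (Int.ofNat n) = 2 * n := rfl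
theorem encode_int_negSucc (n : ℕ) : Encodable.encode (Int.negSucc n) = 2 * n + 1 := rfl

theorem zabs_encode (z : ℤ) : zabs (Encodable.encode z) = z.natAbs := by
  cases z with
  | ofNat n =>
    rw [encode_int_ofNat]
    show 2 * n / 2 + 2 * n % 2 = n
    omega
  | negSucc n =>
    rw [encode_int_negSucc]
    show (2 * n + 1) / 2 + (2 * n + 1) % 2 = n + 1
    omega

/-- (toNat of z, toNat of -z) for the integer z with encoding u -/
def zn (u : ℕ) : ℕ × ℕ := if u % 2 = 0 then (u / 2, 0) else (0, u / 2 + 1)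

theorem zn_encode (z : ℤ) : zn (Encodable.encode z) = (z.toNat, (-z).toNat) := by
  cases z with
  | ofNat n =>
    rw [encode_int_ofNat]
    have h : (2 * n) % 2 = 0 := by omega
    simp only [zn, h, if_pos]
    have h2 : (2 * n) / 2 = n := by omega
    rw [h2]
    simp
  | negSucc n =>
    rw [encode_int_negSucc]
    have h : (2 * n + 1) % 2 = 1 := by omega
    simp only [zn, h]
    norm_num
    have h2 : (2 * n + 1) / 2 = n := by omega
    rw [h2]

theorem P_iff (y : ℕ) :
    P y ↔ 0 < y.unpair.2 ∧ Nat.gcd (zabs y.unpair.1) y.unpair.2 = 1 := by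
  constructor
  · rintro ⟨b, rfl⟩
    rw [show @Encodable.encode ℚ Rat.instEncodable b = E0 b from rfl, E0_eq, Nat.unpair_pair]
    refine ⟨b.pos, ?_⟩
    rw [zabs_encode]
    exact b.reduced
  · rintro ⟨h1, h2⟩
    set u := y.unpair.1
    set d := y.unpair.2
    have hz : Encodable.encode (ofNat ℤ u) = u := encode_ofNat u
    have hco : (ofNat ℤ u).natAbs.Coprime d := by
      rw [Nat.coprime_iff_gcd_eq_one, ← zabs_encode (ofNat ℤ u), hz]
      exact h2
    refine ⟨⟨ofNat ℤ u, d, h1.ne', hco⟩, ?_⟩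
    show Nat.pair (Encodable.encode (ofNat ℤ u)) d = y
    rw [hz]
    exact Nat.pair_unpair y


theorem primrec_zabs : Primrec zabs :=
  Primrec.nat_add.comp (Primrec.nat_div.comp .id (.const 2))
    (Primrec.nat_mod.comp .id (.const 2))

theorem primrec_zn : Primrec zn := by
  refine Primrec.ite (Primrec.eq.comp (Primrec.nat_mod.comp .id (.const 2)) (.const 0)) ?_ ?_
  · exact Primrec.pair (Primrec.nat_div.comp .id (.const 2)) (.const 0)
  · exact Primrec.pair (.const 0)
      (Primrec.succ.comp (Primrec.nat_div.comp .id (.const 2)))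

theorem primrec_decide_P : Primrec fun y => decide (P y) := by
  have hexp : Primrec fun y : ℕ =>
      (decide (0 < y.unpair.2) && decide (gcdf (zabs y.unpair.1, y.unpair.2) = 1)) := by
    have hu2 : Primrec fun y : ℕ => y.unpair.2 := Primrec.snd.comp Primrec.unpair
    have hu1 : Primrec fun y : ℕ => y.unpair.1 := Primrec.fst.comp Primrec.unpair
    exact (Primrec.dom_bool₂ (· && ·)).comp
      (Primrec.nat_lt.comp (.const 0) hu2).decide
      (Primrec.eq.comp (primrec_gcdf.comp (Primrec.pair (primrec_zabs.comp hu1) hu2)) (.const 1)).decide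
  refine hexp.of_eq fun y => ?_
  rw [Bool.eq_iff_iff]
  simp only [Bool.and_eq_true, decide_eq_true_eq, gcdf_eq', P_iff]

theorem computable_E0 : Computable E0 := by
  have h2 := computable_nth primrec_decide_P P_infinite
  have h3 : E0 = fun b => Nat.nth P (@Encodable.encode ℚ Primcodable.toEncodable b) :=
    funext fun b => (nth_encodeQ b).symm
  rw [h3]
  exact h2.comp Computable.encode

/-- numerator (positive part, negative part) and denominator data of a rational -/
def Phi (b : ℚ) : ℕ × ℕ × ℕ :=
  ((zn (E0 b).unpair.1).1, (zn (E0 b).unpair.1).2, (E0 b).unpair.2)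

theorem Phi_eq (b : ℚ) : Phi b = (b.num.toNat, (-b.num).toNat, b.den) := by
  unfold Phi
  rw [E0_eq, Nat.unpair_pair]
  simp only [zn_encode]

theorem computable_Phi : Computable Phi := by
  have hE := computable_E0
  have hu1 : Computable fun b : ℚ => (E0 b).unpair.1 :=
    (Primrec.fst.comp Primrec.unpair).to_comp.comp hE
  have hu2 : Computable fun b : ℚ => (E0 b).unpair.2 :=
    (Primrec.snd.comp Primrec.unpair).to_comp.comp hE
  exact Computable.pair ((Primrec.fst.comp primrec_zn).to_comp.comp hu1)
    (Computable.pair ((Primrec.snd.comp primrec_zn).to_comp.comp hu1) hu2)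

/-- the decidable core of the matrix -/
def core (w : (ℕ × ℕ × ℕ) × (ℕ × ℕ × ℕ) × ℕ × ℕ) : Bool :=
  decide (w.2.2.2.unpair.2.unpair.1 + 1 ≤ w.2.2.1) ||
  decide (pw (w.2.1.2.2 * (w.2.2.2.unpair.2.unpair.1 + 1) * pw (2, w.2.2.2.unpair.2.unpair.2),
        w.1.2.2) * pw (w.2.2.2.unpair.2.unpair.1 + 1, w.1.2.1) ≤
      pw (((w.2.1.1 * (w.2.2.2.unpair.2.unpair.1 + 1) + (zn w.2.2.2.unpair.1).2 * w.2.1.2.2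
        - (w.2.1.2.1 * (w.2.2.2.unpair.2.unpair.1 + 1) + (zn w.2.2.2.unpair.1).1 * w.2.1.2.2))
      + (w.2.1.2.1 * (w.2.2.2.unpair.2.unpair.1 + 1) + (zn w.2.2.2.unpair.1).1 * w.2.1.2.2
        - (w.2.1.1 * (w.2.2.2.unpair.2.unpair.1 + 1) + (zn w.2.2.2.unpair.1).2 * w.2.1.2.2)))
        * pw (2, w.2.2.2.unpair.2.unpair.2) + w.2.1.2.2 * (w.2.2.2.unpair.2.unpair.1 + 1),
        w.1.2.2) * pw (w.2.2.2.unpair.2.unpair.1 + 1, w.1.1))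

/-- readable form of `core` -/
theorem core_eq (bd rd : ℕ × ℕ × ℕ) (k m : ℕ) :
    core (bd, rd, k, m) =
      (decide (m.unpair.2.unpair.1 + 1 ≤ k) ||
        decide
          (pw (rd.2.2 * (m.unpair.2.unpair.1 + 1) * pw (2, m.unpair.2.unpair.2), bd.2.2) *
              pw (m.unpair.2.unpair.1 + 1, bd.2.1) ≤
            pw (((rd.1 * (m.unpair.2.unpair.1 + 1) + (zn m.unpair.1).2 * rd.2.2
                - (rd.2.1 * (m.unpair.2.unpair.1 + 1) + (zn m.unpair.1).1 * rd.2.2))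
              + (rd.2.1 * (m.unpair.2.unpair.1 + 1) + (zn m.unpair.1).1 * rd.2.2
                - (rd.1 * (m.unpair.2.unpair.1 + 1) + (zn m.unpair.1).2 * rd.2.2)))
                * pw (2, m.unpair.2.unpair.2) + rd.2.2 * (m.unpair.2.unpair.1 + 1), bd.2.2) *
              pw (m.unpair.2.unpair.1 + 1, bd.1))) := rfl

theorem primrec_core : Primrec core := by
  have hbd : Primrec fun w : (ℕ × ℕ × ℕ) × (ℕ × ℕ × ℕ) × ℕ × ℕ => w.1 := Primrec.fst
  have hrd : Primrec fun w : (ℕ × ℕ × ℕ) × (ℕ × ℕ × ℕ) × ℕ × ℕ => w.2.1 :=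
    Primrec.fst.comp Primrec.snd
  have hk : Primrec fun w : (ℕ × ℕ × ℕ) × (ℕ × ℕ × ℕ) × ℕ × ℕ => w.2.2.1 :=
    Primrec.fst.comp (Primrec.snd.comp Primrec.snd)
  have hm : Primrec fun w : (ℕ × ℕ × ℕ) × (ℕ × ℕ × ℕ) × ℕ × ℕ => w.2.2.2 :=
    Primrec.snd.comp (Primrec.snd.comp Primrec.snd)
  have ha : Primrec fun w : (ℕ × ℕ × ℕ) × (ℕ × ℕ × ℕ) × ℕ × ℕ => w.2.2.2.unpair.1 :=
    Primrec.fst.comp (Primrec.unpair.comp hm)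
  have hq : Primrec fun w : (ℕ × ℕ × ℕ) × (ℕ × ℕ × ℕ) × ℕ × ℕ =>
      w.2.2.2.unpair.2.unpair.1 + 1 :=
    Primrec.succ.comp (Primrec.fst.comp (Primrec.unpair.comp
      (Primrec.snd.comp (Primrec.unpair.comp hm))))
  have hj : Primrec fun w : (ℕ × ℕ × ℕ) × (ℕ × ℕ × ℕ) × ℕ × ℕ =>
      w.2.2.2.unpair.2.unpair.2 :=
    Primrec.snd.comp (Primrec.unpair.comp (Primrec.snd.comp (Primrec.unpair.comp hm)))
  have hpd : Primrec fun w : (ℕ × ℕ × ℕ) × (ℕ × ℕ × ℕ) × ℕ × ℕ => zn w.2.2.2.unpair.1 :=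
    primrec_zn.comp ha
  have hd0 : Primrec fun w : (ℕ × ℕ × ℕ) × (ℕ × ℕ × ℕ) × ℕ × ℕ => w.2.1.2.2 :=
    Primrec.snd.comp (Primrec.snd.comp hrd)
  have hX : Primrec fun w : (ℕ × ℕ × ℕ) × (ℕ × ℕ × ℕ) × ℕ × ℕ =>
      w.2.1.1 * (w.2.2.2.unpair.2.unpair.1 + 1) + (zn w.2.2.2.unpair.1).2 * w.2.1.2.2 :=
    Primrec.nat_add.comp (Primrec.nat_mul.comp (Primrec.fst.comp hrd) hq)
      (Primrec.nat_mul.comp (Primrec.snd.comp hpd) hd0)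
  have hY : Primrec fun w : (ℕ × ℕ × ℕ) × (ℕ × ℕ × ℕ) × ℕ × ℕ =>
      w.2.1.2.1 * (w.2.2.2.unpair.2.unpair.1 + 1) + (zn w.2.2.2.unpair.1).1 * w.2.1.2.2 :=
    Primrec.nat_add.comp (Primrec.nat_mul.comp (Primrec.fst.comp (Primrec.snd.comp hrd)) hq)
      (Primrec.nat_mul.comp (Primrec.fst.comp hpd) hd0)
  have hA : Primrec fun w : (ℕ × ℕ × ℕ) × (ℕ × ℕ × ℕ) × ℕ × ℕ =>
      (w.2.1.1 * (w.2.2.2.unpair.2.unpair.1 + 1) + (zn w.2.2.2.unpair.1).2 * w.2.1.2.2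
        - (w.2.1.2.1 * (w.2.2.2.unpair.2.unpair.1 + 1) + (zn w.2.2.2.unpair.1).1 * w.2.1.2.2))
      + (w.2.1.2.1 * (w.2.2.2.unpair.2.unpair.1 + 1) + (zn w.2.2.2.unpair.1).1 * w.2.1.2.2
        - (w.2.1.1 * (w.2.2.2.unpair.2.unpair.1 + 1) + (zn w.2.2.2.unpair.1).2 * w.2.1.2.2)) :=
    Primrec.nat_add.comp (Primrec.nat_sub.comp hX hY) (Primrec.nat_sub.comp hY hX)
  have h2j : Primrec fun w : (ℕ × ℕ × ℕ) × (ℕ × ℕ × ℕ) × ℕ × ℕ =>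
      pw (2, w.2.2.2.unpair.2.unpair.2) :=
    primrec_pw.comp (Primrec.pair (.const 2) hj)
  have hN : Primrec fun w : (ℕ × ℕ × ℕ) × (ℕ × ℕ × ℕ) × ℕ × ℕ =>
      ((w.2.1.1 * (w.2.2.2.unpair.2.unpair.1 + 1) + (zn w.2.2.2.unpair.1).2 * w.2.1.2.2
        - (w.2.1.2.1 * (w.2.2.2.unpair.2.unpair.1 + 1) + (zn w.2.2.2.unpair.1).1 * w.2.1.2.2))
      + (w.2.1.2.1 * (w.2.2.2.unpair.2.unpair.1 + 1) + (zn w.2.2.2.unpair.1).1 * w.2.1.2.2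
        - (w.2.1.1 * (w.2.2.2.unpair.2.unpair.1 + 1) + (zn w.2.2.2.unpair.1).2 * w.2.1.2.2)))
        * pw (2, w.2.2.2.unpair.2.unpair.2) + w.2.1.2.2 * (w.2.2.2.unpair.2.unpair.1 + 1) :=
    Primrec.nat_add.comp (Primrec.nat_mul.comp hA h2j) (Primrec.nat_mul.comp hd0 hq)
  have hD : Primrec fun w : (ℕ × ℕ × ℕ) × (ℕ × ℕ × ℕ) × ℕ × ℕ =>
      w.2.1.2.2 * (w.2.2.2.unpair.2.unpair.1 + 1) * pw (2, w.2.2.2.unpair.2.unpair.2) :=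
    Primrec.nat_mul.comp (Primrec.nat_mul.comp hd0 hq) h2j
  refine (Primrec.dom_bool₂ (· || ·)).comp ?_ ?_
  · exact (Primrec.nat_le.comp hq hk).decide
  · exact PrimrecPred.decide <| Primrec.nat_le.comp
      (Primrec.nat_mul.comp
        (primrec_pw.comp (Primrec.pair hD (Primrec.snd.comp (Primrec.snd.comp hbd))))
        (primrec_pw.comp (Primrec.pair hq (Primrec.fst.comp (Primrec.snd.comp hbd)))))
      (Primrec.nat_mul.comp
        (primrec_pw.comp (Primrec.pair hN (Primrec.snd.comp (Primrec.snd.comp hbd))))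
        (primrec_pw.comp (Primrec.pair hq (Primrec.fst.comp hbd))))

theorem A_cast (n p : ℤ) (q d : ℕ) :
    ((n.toNat * q + (-p).toNat * d - ((-n).toNat * q + p.toNat * d)
      + ((-n).toNat * q + p.toNat * d - (n.toNat * q + (-p).toNat * d)) : ℕ) : ℝ)
      = |(n : ℝ) * q - p * d| := by
  set X : ℕ := n.toNat * q + (-p).toNat * d with hXdef
  set Y : ℕ := (-n).toNat * q + p.toNat * d with hYdef
  have hXY : (X : ℤ) - Y = n * q - p * d := by
    rw [hXdef, hYdef]
    push_cast
    have h1 : (n.toNat : ℤ) - (-n).toNat = n := by omega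
    have h2 : ((-p).toNat : ℤ) - p.toNat = -p := by omega
    linear_combination (q : ℤ) * h1 + (d : ℤ) * h2
  clear_value X Y
  have habs : ((X - Y + (Y - X) : ℕ) : ℤ) = |(n * q - p * d : ℤ)| := by
    rw [← hXY]
    rcases le_total X Y with h | h
    · rw [abs_sub_comm, abs_of_nonneg (show (0:ℤ) ≤ (Y:ℤ) - (X:ℤ) by omega)]
      push_cast [Nat.sub_eq_zero_of_le h]
      omega
    · rw [abs_of_nonneg (show (0:ℤ) ≤ (X:ℤ) - (Y:ℤ) by omega)]
      push_cast [Nat.sub_eq_zero_of_le h]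
      omega
  calc ((X - Y + (Y - X) : ℕ) : ℝ) = ((|(n * q - p * d : ℤ)| : ℤ) : ℝ) := by exact_mod_cast habs
    _ = |((n * q - p * d : ℤ) : ℝ)| := by rw [Int.cast_abs]
    _ = |(n : ℝ) * q - p * d| := by push_cast; ring_nf

/-- the key numeric equivalence -/
theorem num_iff (b z : ℚ) (p : ℤ) (q j : ℕ) (hq : 0 < q) :
    ((z.den * q * 2 ^ j) ^ b.den * q ^ (-b.num).toNat ≤
      ((z.num.toNat * q + (-p).toNat * z.den - ((-z.num).toNat * q + p.toNat * z.den)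
        + ((-z.num).toNat * q + p.toNat * z.den - (z.num.toNat * q + (-p).toNat * z.den)))
          * 2 ^ j + z.den * q) ^ b.den * q ^ b.num.toNat
      ↔ (q : ℝ) ^ (-(b : ℝ)) ≤ |(z : ℝ) - (p : ℝ) / (q : ℝ)| + (2 : ℝ)⁻¹ ^ j) := by
  set A : ℕ := z.num.toNat * q + (-p).toNat * z.den - ((-z.num).toNat * q + p.toNat * z.den)
        + ((-z.num).toNat * q + p.toNat * z.den - (z.num.toNat * q + (-p).toNat * z.den)) with hA
  set N : ℕ := A * 2 ^ j + z.den * q with hN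
  set D : ℕ := z.den * q * 2 ^ j with hD
  have hdpos : 0 < z.den := z.pos
  have hqR : (0 : ℝ) < q := by exact_mod_cast hq
  have hdR : (0 : ℝ) < (z.den : ℝ) := by exact_mod_cast hdpos
  have h2R : (0 : ℝ) < (2 : ℝ) ^ j := by positivity
  have hDpos : 0 < D := by positivity
  have hNpos : 0 < N := by positivity
  have hDR : (0 : ℝ) < (D : ℝ) := by exact_mod_cast hDpos
  have hNR : (0 : ℝ) < (N : ℝ) := by exact_mod_cast hNpos
  -- step: t = N / D
  have ht : |(z : ℝ) - (p : ℝ) / (q : ℝ)| + (2 : ℝ)⁻¹ ^ j = (N : ℝ) / (D : ℝ) := by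
    have hzc : (z : ℝ) = (z.num : ℝ) / (z.den : ℝ) := by rw [Rat.cast_def]
    have habs : |(z : ℝ) - (p : ℝ) / (q : ℝ)| = |(z.num : ℝ) * q - p * z.den| / (z.den * q) := by
      rw [hzc, div_sub_div _ _ (ne_of_gt hdR) (ne_of_gt hqR), abs_div,
        abs_of_pos (by positivity : (0:ℝ) < (z.den : ℝ) * q), mul_comm ((z.den : ℝ)) ((p : ℝ))]
    have hAc : (A : ℝ) = |(z.num : ℝ) * q - p * z.den| := A_cast z.num p q z.den
    rw [habs, ← hAc]
    have hNc : (N : ℝ) = (A : ℝ) * 2 ^ j + z.den * q := by rw [hN]; push_cast; ring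
    have hDc : (D : ℝ) = (z.den : ℝ) * q * 2 ^ j := by rw [hD]; push_cast; ring
    rw [hNc, hDc, inv_pow]
    field_simp
  -- step: rpow manipulation
  have hv : b.den ≠ 0 := b.den_nz
  have hrw : ((q : ℝ) ^ (-(b : ℝ))) ^ b.den
      = (q : ℝ) ^ ((-b.num).toNat : ℕ) / (q : ℝ) ^ (b.num.toNat : ℕ) := by
    rw [← Real.rpow_natCast ((q : ℝ) ^ (-(b : ℝ))) b.den, ← Real.rpow_mul hqR.le]
    have hb : -(b : ℝ) * (b.den : ℕ) = ((-b.num : ℤ) : ℝ) := by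
      have hbc : (b : ℝ) = (b.num : ℝ) / (b.den : ℝ) := by rw [Rat.cast_def]
      have hbd : (b.den : ℝ) ≠ 0 := by exact_mod_cast hv
      rw [hbc]
      push_cast
      field_simp
    rw [hb, Real.rpow_intCast]
    have hz : (q : ℝ) ^ (-b.num : ℤ)
        = (q : ℝ) ^ (((-b.num).toNat : ℤ)) / (q : ℝ) ^ ((b.num.toNat : ℤ)) := by
      rw [← zpow_sub₀ (ne_of_gt hqR)]
      congr 1
      omega
    rw [hz, zpow_natCast, zpow_natCast]
  have key : (q : ℝ) ^ (-(b : ℝ)) ≤ (N : ℝ) / D ↔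
      ((D : ℝ)) ^ b.den * (q : ℝ) ^ ((-b.num).toNat) ≤
        ((N : ℝ)) ^ b.den * (q : ℝ) ^ (b.num.toNat) := by
    rw [← pow_le_pow_iff_left₀ (by positivity) (by positivity) hv, hrw, div_pow,
      div_le_div_iff₀ (by positivity) (by positivity),
      mul_comm ((q : ℝ) ^ ((-b.num).toNat)) (((D : ℝ)) ^ b.den)]
  rw [ht, key]
  constructor
  · intro h; exact_mod_cast h
  · intro h; exact_mod_cast h

theorem core_iff (b z : ℚ) (k m : ℕ) :
    (core (Phi b, Phi z, k, m) = true) ↔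
      (m.unpair.2.unpair.1 + 1 ≤ k ∨
        ((m.unpair.2.unpair.1 + 1 : ℕ) : ℝ) ^ (-(b : ℝ)) ≤
          |(z : ℝ) - ((ofNat ℤ m.unpair.1 : ℤ) : ℝ) / ((m.unpair.2.unpair.1 + 1 : ℕ) : ℝ)|
            + (2 : ℝ)⁻¹ ^ m.unpair.2.unpair.2) := by
  have hzn : zn m.unpair.1 =
      ((ofNat ℤ m.unpair.1).toNat, (-(ofNat ℤ m.unpair.1)).toNat) := by
    conv_lhs => rw [← encode_ofNat (α := ℤ) m.unpair.1]
    exact zn_encode _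
  rw [core_eq, Phi_eq, Phi_eq, hzn]
  simp only [pw_eq]
  rw [Bool.or_eq_true, decide_eq_true_eq, decide_eq_true_eq]
  exact or_congr Iff.rfl
    (num_iff b z (ofNat ℤ m.unpair.1) (m.unpair.2.unpair.1 + 1) m.unpair.2.unpair.2
      (Nat.succ_pos _))

/-- the matrix -/
def Rmat (r : ℕ → ℚ) (b : ℚ) (k m : ℕ) : Bool :=
  core (Phi b, Phi (r m.unpair.2.unpair.2), k, m)

theorem computable_Rmat {r : ℕ → ℚ} (hr : Computable r) :
    Computable fun p : ℚ × ℕ × ℕ => Rmat r p.1 p.2.1 p.2.2 := by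
  have hm : Computable fun p : ℚ × ℕ × ℕ => p.2.2 := Computable.snd.comp Computable.snd
  have hj : Computable fun p : ℚ × ℕ × ℕ => p.2.2.unpair.2.unpair.2 :=
    (Primrec.snd.comp (Primrec.unpair.comp (Primrec.snd.comp Primrec.unpair))).to_comp.comp hm
  exact primrec_core.to_comp.comp
    (Computable.pair (computable_Phi.comp Computable.fst)
      (Computable.pair (computable_Phi.comp (hr.comp hj))
        (Computable.pair (Computable.fst.comp Computable.snd) hm)))

theorem Rmat_iff (r : ℕ → ℚ) (b : ℚ) (k m : ℕ) :
    (Rmat r b k m = true) ↔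
      (m.unpair.2.unpair.1 + 1 ≤ k ∨
        ((m.unpair.2.unpair.1 + 1 : ℕ) : ℝ) ^ (-(b : ℝ)) ≤
          |((r m.unpair.2.unpair.2 : ℚ) : ℝ) -
              ((ofNat ℤ m.unpair.1 : ℤ) : ℝ) / ((m.unpair.2.unpair.1 + 1 : ℕ) : ℝ)|
            + (2 : ℝ)⁻¹ ^ m.unpair.2.unpair.2) :=
  core_iff b (r m.unpair.2.unpair.2) k m

theorem forall_j_iff {x : ℝ} {r : ℕ → ℚ} (hra : ∀ j : ℕ, |x - (r j : ℝ)| < (2 : ℝ)⁻¹ ^ j)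
    (u v : ℝ) :
    (∀ j : ℕ, v ≤ |(r j : ℝ) - u| + (2 : ℝ)⁻¹ ^ j) ↔ v ≤ |x - u| := by
  constructor
  · intro h
    by_contra hlt
    push_neg at hlt
    obtain ⟨j, hj⟩ : ∃ j : ℕ, (2 : ℝ)⁻¹ ^ j < (v - |x - u|) / 2 :=
      exists_pow_lt_of_lt_one (by linarith) (by norm_num)
    have h1 := h j
    have h2 : |(r j : ℝ) - u| ≤ |x - r j| + |x - u| := by
      calc |(r j : ℝ) - u| = |((r j : ℝ) - x) + (x - u)| := by rw [sub_add_sub_cancel]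
        _ ≤ |(r j : ℝ) - x| + |x - u| := abs_add_le _ _
        _ = |x - r j| + |x - u| := by rw [abs_sub_comm]
    have h3 := hra j
    linarith
  · intro h j
    have h2 : |x - u| ≤ |x - r j| + |(r j : ℝ) - u| := by
      calc |x - u| = |(x - r j) + ((r j : ℝ) - u)| := by rw [sub_add_sub_cancel]
        _ ≤ |x - r j| + |(r j : ℝ) - u| := abs_add_le _ _
    have h3 := hra j
    linarith

end RceAux

open RceAux Denumerable in
theorem rightCEInZeroJump_of_computable_transcendental'
    (x : ℝ) (hx : IsComputableReal x) :
    RePredInZeroJump (fun b : ℚ =>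
      {pq : ℤ × ℤ | 0 < pq.2 ∧
        |x - (pq.1 : ℝ) / (pq.2 : ℝ)| < 1 / (pq.2 : ℝ) ^ (b : ℝ)}.Finite) := by
  obtain ⟨r, hrc, hra⟩ := hx
  refine ⟨Rmat r, computable_Rmat hrc, fun b => ?_⟩
  constructor
  · intro hfin
    obtain ⟨k, hk⟩ := (hfin.image fun pq : ℤ × ℤ => pq.2.toNat).bddAbove
    refine ⟨k, fun m => ?_⟩
    rw [Rmat_iff]
    set a := m.unpair.1
    set c := m.unpair.2.unpair.1
    set j := m.unpair.2.unpair.2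
    by_cases hck : c + 1 ≤ k
    · exact Or.inl hck
    right
    set p : ℤ := ofNat ℤ a with hp
    set q : ℕ := c + 1 with hqdef
    have hnotmem : (p, (q : ℤ)) ∉ {pq : ℤ × ℤ | 0 < pq.2 ∧
        |x - (pq.1 : ℝ) / (pq.2 : ℝ)| < 1 / (pq.2 : ℝ) ^ (b : ℝ)} := by
      intro hmem
      have h1 : ((p, (q : ℤ)).2.toNat) ≤ k := hk ⟨(p, (q : ℤ)), hmem, rfl⟩
      simp only [Int.toNat_natCast] at h1
      omega
    have hge : 1 / ((q : ℕ) : ℝ) ^ (b : ℝ) ≤ |x - (p : ℝ) / ((q : ℕ) : ℝ)| := by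
      by_contra hc
      push_neg at hc
      refine hnotmem ⟨by positivity, ?_⟩
      push_cast
      push_cast at hc
      exact hc
    have hge' : ((q : ℕ) : ℝ) ^ (-(b : ℝ)) ≤ |x - (p : ℝ) / ((q : ℕ) : ℝ)| := by
      rw [Real.rpow_neg (by positivity), ← one_div]
      exact hge
    exact (forall_j_iff hra ((p : ℝ) / ((q : ℕ) : ℝ)) _).mpr hge' j
  · rintro ⟨k, hk⟩
    set C : ℝ := (max (k : ℝ) 1) ^ |(b : ℝ)| with hC
    set M : ℤ := ⌈(C + |x|) * (k : ℝ)⌉ with hM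
    apply Set.Finite.subset ((Set.finite_Icc (-M) M).prod (Set.finite_Icc (1 : ℤ) (k : ℤ)))
    rintro ⟨p, qz⟩ ⟨hq, hlt⟩
    dsimp only at hq hlt
    have hq1 : (1 : ℤ) ≤ qz := hq
    have hqk : qz ≤ (k : ℤ) := by
      by_contra hgt
      push_neg at hgt
      set q : ℕ := qz.toNat with hqdef
      have hq0 : 0 < q := by omega
      have hcast : ((q : ℕ) : ℝ) = (qz : ℝ) := by
        have h1 : ((q : ℕ) : ℤ) = qz := Int.toNat_of_nonneg hq.le
        exact_mod_cast congrArg (fun t : ℤ => (t : ℝ)) h1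
      have hall : ∀ j : ℕ, ((q : ℕ) : ℝ) ^ (-(b : ℝ)) ≤
          |(r j : ℝ) - (p : ℝ) / ((q : ℕ) : ℝ)| + (2 : ℝ)⁻¹ ^ j := by
        intro j
        have h := hk (Nat.pair (Encodable.encode p) (Nat.pair (q - 1) j))
        rw [Rmat_iff] at h
        simp only [Nat.unpair_pair] at h
        have hsub : q - 1 + 1 = q := by omega
        rw [hsub, ofNat_encode] at h
        rcases h with h | h
        · exfalso; omega
        · exact h
      have hres := (forall_j_iff hra ((p : ℝ) / ((q : ℕ) : ℝ)) _).mp hall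
      rw [hcast] at hres
      rw [Real.rpow_neg (by positivity : (0:ℝ) ≤ (qz : ℝ)), ← one_div] at hres
      exact absurd hlt (not_lt.mpr hres)
    refine ⟨?_, hq1, hqk⟩
    have hqzR : (1 : ℝ) ≤ (qz : ℝ) := by exact_mod_cast hq1
    have hqzk : (qz : ℝ) ≤ (k : ℝ) := by exact_mod_cast hqk
    have hCb : 1 / (qz : ℝ) ^ (b : ℝ) ≤ C := by
      rw [one_div, ← Real.rpow_neg (by positivity)]
      calc (qz : ℝ) ^ (-(b : ℝ)) ≤ (qz : ℝ) ^ |(b : ℝ)| :=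
            Real.rpow_le_rpow_of_exponent_le hqzR (neg_le_abs _)
        _ ≤ (max (k : ℝ) 1) ^ |(b : ℝ)| :=
            Real.rpow_le_rpow (by linarith) (le_trans hqzk (le_max_left _ _)) (abs_nonneg _)
    have hCpos : 0 ≤ C := by
      rw [hC]; positivity
    have habs : |(p : ℝ) / (qz : ℝ)| ≤ C + |x| := by
      calc |(p : ℝ) / qz| = |((p : ℝ) / qz - x) + x| := by rw [sub_add_cancel]
        _ ≤ |(p : ℝ) / qz - x| + |x| := abs_add_le _ _
        _ = |x - (p : ℝ) / qz| + |x| := by rw [abs_sub_comm]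
        _ ≤ 1 / (qz : ℝ) ^ (b : ℝ) + |x| := by linarith [hlt]
        _ ≤ C + |x| := by linarith
    have hqz0 : (0 : ℝ) < (qz : ℝ) := by linarith
    have hpb : |(p : ℝ)| ≤ (C + |x|) * (k : ℝ) := by
      rw [abs_div, abs_of_pos hqz0, div_le_iff₀ hqz0] at habs
      calc |(p : ℝ)| ≤ (C + |x|) * (qz : ℝ) := habs
        _ ≤ (C + |x|) * (k : ℝ) :=
            mul_le_mul_of_nonneg_left hqzk (by positivity)
    have hpM : |p| ≤ M := by
      have h1 : |(p : ℝ)| ≤ (M : ℝ) := le_trans hpb (le_trans (Int.le_ceil _) le_rfl)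
      exact_mod_cast (by push_cast; exact h1 : ((|p| : ℤ) : ℝ) ≤ ((M : ℤ) : ℝ))
    exact abs_le.mp hpM


/-- If `x` is a computable real number that is not algebraic and its irrationality exponent
is finite, then its irrationality exponent is right-computably enumerable in `0'`: the set of
rational `b` for which only finitely many rationals `p/q` satisfy `|x − p/q| < 1/q^b` is
computably enumerable with oracle `0'`. -/
theorem rightCEInZeroJump_of_computable_transcendental
    (x : ℝ) (hx : IsComputableReal x) (halg : ¬ IsAlgebraic ℤ x)
    (hfin : BddAbove {z : ℝ | {pq : ℤ × ℤ | 0 < pq.2 ∧ 0 < |x - (pq.1 : ℝ) / (pq.2 : ℝ)| ∧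
      |x - (pq.1 : ℝ) / (pq.2 : ℝ)| < 1 / (pq.2 : ℝ) ^ z}.Infinite}) :
    RePredInZeroJump (fun b : ℚ =>
      {pq : ℤ × ℤ | 0 < pq.2 ∧
        |x - (pq.1 : ℝ) / (pq.2 : ℝ)| < 1 / (pq.2 : ℝ) ^ (b : ℝ)}.Finite) :=
  rightCEInZeroJump_of_computable_transcendental' x hx
end

section
/- For a real b > 2 and primes p₁ < p₂ with M < p₁ < p₂ < 2M (M a sufficiently large positive integer depending only on a lower bound β > 2 for b), the sets G_{p₁}(b) and G_{p₂}(b) are disjoint, and the distance between any point of G_{p₁}(b) and any point of G_{p₂}(b) is at least 1/(4M²) − 2/M^b ≥ 1/(8M²). -/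
/-- `G_q(b) = { x ∈ (1/q^b, 1 − 1/q^b) : ∃ p ∈ ℤ, |p/q − x| < 1/q^b }`. -/
def G (q : ℕ) (b : ℝ) : Set ℝ :=
  {x : ℝ | x ∈ Set.Ioo (1 / (q : ℝ) ^ b) (1 - 1 / (q : ℝ) ^ b) ∧
    ∃ p : ℤ, |(p : ℝ) / (q : ℝ) - x| < 1 / (q : ℝ) ^ b}

set_option maxHeartbeats 1000000

/-- For a real `b > 2` (with lower bound `β > 2`) and primes `M < p₁ < p₂ < 2M`, with `M`
sufficiently large depending only on `β`, the sets `G_{p₁}(b)` and `G_{p₂}(b)` are disjoint,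
and the distance between any point of `G_{p₁}(b)` and any point of `G_{p₂}(b)` is at least
`1/(4M²) − 2/M^b ≥ 1/(8M²)`. -/
theorem G_disjoint_and_separated (β : ℝ) (hβ : 2 < β) :
    ∃ M₀ : ℕ, ∀ M : ℕ, M₀ ≤ M → ∀ b : ℝ, β ≤ b →
      ∀ p₁ p₂ : ℕ, p₁.Prime → p₂.Prime → M < p₁ → p₁ < p₂ → p₂ < 2 * M →
        Disjoint (G p₁ b) (G p₂ b) ∧
        1 / (8 * (M : ℝ) ^ 2) ≤ 1 / (4 * (M : ℝ) ^ 2) - 2 / (M : ℝ) ^ b ∧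
        ∀ x ∈ G p₁ b, ∀ y ∈ G p₂ b,
          1 / (4 * (M : ℝ) ^ 2) - 2 / (M : ℝ) ^ b ≤ |x - y| := by
  have hβ2 : 0 < β - 2 := by linarith
  refine ⟨⌈(16:ℝ) ^ (1/(β-2))⌉₊ + 1, ?_⟩
  intro M hM b hb p₁ p₂ hp₁ hp₂ hMp₁ hp₁p₂ hp₂M
  have hM1 : (1:ℕ) ≤ M := le_trans (Nat.le_add_left 1 _) hM
  have hM1R : (1:ℝ) ≤ (M:ℝ) := by exact_mod_cast hM1
  have hMpos : (0:ℝ) < M := by linarith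
  have hb2 : (2:ℝ) ≤ b := le_trans hβ.le hb
  have hb0 : (0:ℝ) ≤ b := by linarith
  -- bound : 16 ≤ M ^ (β - 2)
  have hMge : (16:ℝ) ^ (1/(β-2)) ≤ (M:ℝ) := by
    have := Nat.le_ceil ((16:ℝ) ^ (1/(β-2)))
    have h2 : (⌈(16:ℝ) ^ (1/(β-2))⌉₊ : ℝ) ≤ (M:ℝ) := by
      exact_mod_cast le_trans (Nat.le_succ _) hM
    linarith
  have h16 : (16:ℝ) ≤ (M:ℝ) ^ (β - 2) := by
    have h0 : (0:ℝ) ≤ (16:ℝ) ^ (1/(β-2)) := Real.rpow_nonneg (by norm_num) _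
    calc (16:ℝ) = ((16:ℝ) ^ (1/(β-2))) ^ (β - 2) := by
          rw [← Real.rpow_mul (by norm_num), one_div,
            inv_mul_cancel₀ (ne_of_gt hβ2), Real.rpow_one]
      _ ≤ (M:ℝ) ^ (β - 2) := Real.rpow_le_rpow h0 hMge hβ2.le
  have h16b : (16:ℝ) ≤ (M:ℝ) ^ (b - 2) :=
    le_trans h16 (Real.rpow_le_rpow_of_exponent_le hM1R (by linarith))
  have hMbeq : (M:ℝ) ^ b = (M:ℝ) ^ 2 * (M:ℝ) ^ (b - 2) := by
    rw [← Real.rpow_natCast (M:ℝ) 2, ← Real.rpow_add hMpos]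
    norm_num
  have hMb_pos : (0:ℝ) < (M:ℝ) ^ b := Real.rpow_pos_of_pos hMpos b
  have hM2pos : (0:ℝ) < (M:ℝ) ^ 2 := by positivity
  have hsep : 1 / (8 * (M : ℝ) ^ 2) ≤ 1 / (4 * (M : ℝ) ^ 2) - 2 / (M : ℝ) ^ b := by
    have h1 : 2 / (M:ℝ) ^ b ≤ 1 / (8 * (M:ℝ) ^ 2) := by
      rw [div_le_div_iff₀ hMb_pos (by positivity), hMbeq]
      nlinarith
    have h2 : 1 / (8 * (M:ℝ) ^ 2) + 1 / (8 * (M:ℝ) ^ 2) = 1 / (4 * (M:ℝ) ^ 2) := by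
      field_simp; ring
    linarith
  -- key separation
  have key : ∀ x ∈ G p₁ b, ∀ y ∈ G p₂ b,
      1 / (4 * (M : ℝ) ^ 2) - 2 / (M : ℝ) ^ b ≤ |x - y| := by
    intro x hx y hy
    obtain ⟨⟨hx1, hx2⟩, a, ha⟩ := hx
    obtain ⟨⟨hy1, hy2⟩, c, hc⟩ := hy
    have hq₁ : (0:ℝ) < (p₁:ℝ) := by exact_mod_cast hp₁.pos
    have hq₂ : (0:ℝ) < (p₂:ℝ) := by exact_mod_cast hp₂.pos
    have hε₁ : (0:ℝ) < 1 / (p₁:ℝ) ^ b := by positivity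
    have hε₂ : (0:ℝ) < 1 / (p₂:ℝ) ^ b := by positivity
    rw [abs_lt] at ha hc
    -- bounds on a
    have ha1 : (0:ℝ) < (a:ℝ) := by
      have : 0 < (a:ℝ) / p₁ := by linarith
      exact (div_pos_iff.mp this).resolve_right (fun h => absurd h.2 (not_lt.mpr hq₁.le)) |>.1
    have ha2 : (a:ℝ) < p₁ := by
      have : (a:ℝ) / p₁ < 1 := by
        have := ha.2; nlinarith
      calc (a:ℝ) = (a:ℝ)/p₁ * p₁ := by field_simp
        _ < 1 * p₁ := by exact mul_lt_mul_of_pos_right this hq₁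
        _ = p₁ := one_mul _
    have hc1 : (0:ℝ) < (c:ℝ) := by
      have : 0 < (c:ℝ) / p₂ := by linarith
      exact (div_pos_iff.mp this).resolve_right (fun h => absurd h.2 (not_lt.mpr hq₂.le)) |>.1
    have hc2 : (c:ℝ) < p₂ := by
      have : (c:ℝ) / p₂ < 1 := by
        have := hc.2; nlinarith
      calc (c:ℝ) = (c:ℝ)/p₂ * p₂ := by field_simp
        _ < 1 * p₂ := by exact mul_lt_mul_of_pos_right this hq₂
        _ = p₂ := one_mul _
    have haZ1 : (0:ℤ) < a := by exact_mod_cast ha1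
    have haZ2 : a < (p₁:ℤ) := by exact_mod_cast ha2
    have hcZ1 : (0:ℤ) < c := by exact_mod_cast hc1
    -- a * p₂ ≠ c * p₁
    have hne : a * (p₂:ℤ) ≠ c * (p₁:ℤ) := by
      intro h
      have hdvd : (p₁:ℤ) ∣ a * (p₂:ℤ) := ⟨c, by linarith [h]⟩
      have hprime : Prime ((p₁:ℤ)) := Nat.prime_iff_prime_int.mp hp₁
      rcases hprime.dvd_mul.mp hdvd with h1 | h2
      · have := Int.le_of_dvd haZ1 h1
        omega
      · have : p₁ ∣ p₂ := by exact_mod_cast h2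
        rcases (Nat.Prime.eq_one_or_self_of_dvd hp₂ _ this) with h | h
        · exact hp₁.one_lt.ne' h
        · omega
    have habs : (1:ℝ) ≤ |((a * p₂ - c * p₁ : ℤ) : ℝ)| := by
      have : 1 ≤ |a * (p₂:ℤ) - c * p₁| := Int.one_le_abs (sub_ne_zero.mpr hne)
      exact_mod_cast this
    have hrep : (a:ℝ)/p₁ - (c:ℝ)/p₂ = ((a * p₂ - c * p₁ : ℤ) : ℝ) / (p₁ * p₂) := by
      have h1 : (p₁:ℝ) ≠ 0 := ne_of_gt hq₁
      have h2 : (p₂:ℝ) ≠ 0 := ne_of_gt hq₂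
      push_cast
      field_simp
    have hsep2 : 1 / ((p₁:ℝ) * p₂) ≤ |(a:ℝ)/p₁ - (c:ℝ)/p₂| := by
      rw [hrep, abs_div, abs_of_pos (by positivity : (0:ℝ) < (p₁:ℝ) * p₂)]
      exact div_le_div_of_nonneg_right habs (by positivity) |>.trans_eq rfl
    -- triangle inequality
    have htri : 1 / ((p₁:ℝ) * p₂) - 1/(p₁:ℝ)^b - 1/(p₂:ℝ)^b ≤ |x - y| := by
      have e : (a:ℝ)/p₁ - (c:ℝ)/p₂ = ((a:ℝ)/p₁ - x) - ((c:ℝ)/p₂ - y) + (x - y) := by ring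
      have h1 : |(a:ℝ)/p₁ - (c:ℝ)/p₂| ≤ |(a:ℝ)/p₁ - x| + |(c:ℝ)/p₂ - y| + |x - y| := by
        rw [e]
        calc |((a:ℝ)/p₁ - x) - ((c:ℝ)/p₂ - y) + (x - y)|
            ≤ |((a:ℝ)/p₁ - x) - ((c:ℝ)/p₂ - y)| + |x - y| := abs_add_le _ _
          _ ≤ |(a:ℝ)/p₁ - x| + |(c:ℝ)/p₂ - y| + |x - y| := by
              linarith [abs_sub ((a:ℝ)/p₁ - x) ((c:ℝ)/p₂ - y)]
      have h2 : |(a:ℝ)/p₁ - x| < 1/(p₁:ℝ)^b := abs_lt.mpr ha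
      have h3 : |(c:ℝ)/p₂ - y| < 1/(p₂:ℝ)^b := abs_lt.mpr hc
      linarith
    -- compare with M
    have hMp₁R : (M:ℝ) < (p₁:ℝ) := by exact_mod_cast hMp₁
    have hMp₂R : (M:ℝ) < (p₂:ℝ) := by exact_mod_cast (lt_trans hMp₁ hp₁p₂)
    have hp₁M : (p₁:ℝ) < 2 * M := by exact_mod_cast (lt_trans hp₁p₂ hp₂M)
    have hp₂MR : (p₂:ℝ) < 2 * M := by exact_mod_cast hp₂M
    have hA : 1 / (4 * (M:ℝ) ^ 2) ≤ 1 / ((p₁:ℝ) * p₂) := by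
      apply div_le_div_of_nonneg_left (by norm_num) (by positivity)
      nlinarith
    have hB : 1/(p₁:ℝ)^b ≤ 1/(M:ℝ)^b := by
      apply div_le_div_of_nonneg_left (by norm_num) hMb_pos
      exact Real.rpow_le_rpow hMpos.le hMp₁R.le hb0
    have hC : 1/(p₂:ℝ)^b ≤ 1/(M:ℝ)^b := by
      apply div_le_div_of_nonneg_left (by norm_num) hMb_pos
      exact Real.rpow_le_rpow hMpos.le hMp₂R.le hb0
    have : 2 / (M:ℝ)^b = 1/(M:ℝ)^b + 1/(M:ℝ)^b := by ring
    linarith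
  refine ⟨?_, hsep, key⟩
  rw [Set.disjoint_left]
  intro x hx hx'
  have := key x hx x hx'
  simp only [sub_self, abs_zero] at this
  have hpos : 0 < 1 / (8 * (M:ℝ) ^ 2) := by positivity
  linarith
end

section
/- Let I ⊆ [0,1] be an interval and let p be a prime with 3/|I| < M < p < 2M. Then at least p·|I|/3 of the open intervals composing G_p(b) are completely contained in I, where b > 2. -/
/-- Let `I = [u, v] ⊆ [0, 1]` be an interval, `b > 2`, and `p` a prime with
`3/|I| < M < p < 2M`.  Then at least `p·|I|/3` of the open intervals
`(k/p − 1/p^b, k/p + 1/p^b)` composing `G_p(b)` are completely contained in `I`, where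
`G_q(b) = { x ∈ (1/q^b, 1 − 1/q^b) : ∃ p ∈ ℤ, |p/q − x| < 1/q^b }`. -/
theorem count_intervals_of_G_in_interval
    (b : ℝ) (hb : 2 < b) (u v : ℝ) (huv : u < v) (hI : Set.Icc u v ⊆ Set.Icc 0 1)
    (M p : ℕ) (hp : p.Prime) (hM : 3 / (v - u) < (M : ℝ)) (hMp : M < p) (hp2M : p < 2 * M) :
    (p : ℝ) * (v - u) / 3 ≤
      (Nat.card {k : ℤ |
        Set.Ioo ((k : ℝ) / p - 1 / (p : ℝ) ^ b) ((k : ℝ) / p + 1 / (p : ℝ) ^ b) ⊆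
          Set.Icc u v ∧
        Set.Ioo ((k : ℝ) / p - 1 / (p : ℝ) ^ b) ((k : ℝ) / p + 1 / (p : ℝ) ^ b) ⊆
          Set.Ioo (1 / (p : ℝ) ^ b) (1 - 1 / (p : ℝ) ^ b)} : ℝ) := by
  have hvu : 0 < v - u := by linarith
  have hu0 : (0:ℝ) ≤ u := (hI ⟨le_refl u, huv.le⟩).1
  have hv1 : v ≤ 1 := (hI ⟨huv.le, le_refl v⟩).2
  have h3 : (3:ℝ) ≤ 3 / (v - u) := by
    rw [le_div_iff₀ hvu]; nlinarith
  have hM3 : 3 < M := by exact_mod_cast lt_of_le_of_lt h3 hM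
  have hp5 : 5 ≤ p := by omega
  have hp5' : (5:ℝ) ≤ p := by exact_mod_cast hp5
  have hp_pos : (0:ℝ) < p := by linarith
  have hp1 : (1:ℝ) ≤ p := by linarith
  set ε : ℝ := 1 / (p:ℝ) ^ b with hεdef
  have hpb_pos : (0:ℝ) < (p:ℝ) ^ b := Real.rpow_pos_of_pos hp_pos b
  have hε_pos : 0 < ε := by positivity
  have hpb2 : (p:ℝ) ^ (2:ℕ) ≤ (p:ℝ) ^ b := by
    have := Real.rpow_le_rpow_of_exponent_le hp1 hb.le
    rwa [show ((2:ℝ)) = ((2:ℕ):ℝ) by norm_num, Real.rpow_natCast] at this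
  have hεp2 : ε * (p:ℝ) ^ (2:ℕ) ≤ 1 := by
    rw [hεdef, div_mul_eq_mul_div, one_mul, div_le_one hpb_pos]
    exact hpb2
  have hpε : 4 * ((p:ℝ) * ε) ≤ 1 := by
    have h1 : (p:ℝ) * ((p:ℝ) * ε) ≤ 1 := by
      have : (p:ℝ) ^ (2:ℕ) = p * p := sq (p:ℝ) ▸ sq (p:ℝ) ▸ by ring
      nlinarith [hεp2]
    nlinarith [hε_pos, hp_pos]
  -- p (v-u) > 3
  have hpvu : 3 < (p:ℝ) * (v - u) := by
    have h1 : 3 / (v - u) < (p:ℝ) := by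
      have : (M:ℝ) < p := by exact_mod_cast hMp
      linarith
    rw [div_lt_iff₀ hvu] at h1
    linarith
  set a : ℤ := ⌈(p:ℝ) * (u + 2*ε)⌉ with hadef
  set c : ℤ := ⌊(p:ℝ) * (v - 2*ε)⌋ with hcdef
  set T : Set ℤ := {k : ℤ |
        Set.Ioo ((k : ℝ) / p - 1 / (p : ℝ) ^ b) ((k : ℝ) / p + 1 / (p : ℝ) ^ b) ⊆
          Set.Icc u v ∧
        Set.Ioo ((k : ℝ) / p - 1 / (p : ℝ) ^ b) ((k : ℝ) / p + 1 / (p : ℝ) ^ b) ⊆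
          Set.Ioo (1 / (p : ℝ) ^ b) (1 - 1 / (p : ℝ) ^ b)} with hTdef
  have hsub : Set.Icc a c ⊆ T := by
    intro k hk
    have hk1 : (p:ℝ) * (u + 2*ε) ≤ (k:ℝ) := by
      have := Int.ceil_le.mp hk.1
      exact_mod_cast this
    have hk2 : (k:ℝ) ≤ (p:ℝ) * (v - 2*ε) := by
      have := Int.le_floor.mp hk.2
      exact_mod_cast this
    have hq1 : u + 2*ε ≤ (k:ℝ) / p := by
      rw [le_div_iff₀ hp_pos]; linarith [mul_comm (p:ℝ) (u + 2*ε)]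
    have hq2 : (k:ℝ) / p ≤ v - 2*ε := by
      rw [div_le_iff₀ hp_pos]; linarith [mul_comm (p:ℝ) (v - 2*ε)]
    constructor
    · intro x hx
      obtain ⟨hx1, hx2⟩ := hx
      constructor <;> [skip; skip] <;>
        · simp only [← hεdef] at hx1 hx2
          linarith
    · intro x hx
      obtain ⟨hx1, hx2⟩ := hx
      simp only [← hεdef] at hx1 hx2 ⊢
      constructor <;> linarith
  have hTsub : T ⊆ Set.Icc ⌈(p:ℝ) * u⌉ ⌊(p:ℝ) * v⌋ := by
    intro k hk
    have hmid : (k:ℝ)/p ∈ Set.Icc u v := by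
      apply hk.1
      constructor <;> (simp only [← hεdef]; linarith)
    constructor
    · rw [Int.ceil_le]
      have := hmid.1
      have : (p:ℝ) * u ≤ k := by
        rw [← le_div_iff₀' hp_pos]; exact this
      exact_mod_cast this
    · rw [Int.le_floor]
      have := hmid.2
      have : (k:ℝ) ≤ (p:ℝ) * v := by
        rw [← div_le_iff₀' hp_pos]; exact this
      exact_mod_cast this
  have hTfin : T.Finite := (Set.finite_Icc _ _).subset hTsub
  have hcard : (Set.Icc a c).ncard ≤ Nat.card T := by
    rw [Nat.card_coe_set_eq]
    exact Set.ncard_le_ncard hsub hTfin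
  have hIcc_ncard : (Set.Icc a c).ncard = (c + 1 - a).toNat := by
    rw [← Finset.coe_Icc, Set.ncard_coe_finset, Int.card_Icc]
  -- lower bounds on c and upper on a
  have ha_lt : (a:ℝ) < (p:ℝ) * (u + 2*ε) + 1 := Int.ceil_lt_add_one _
  have hc_gt : (p:ℝ) * (v - 2*ε) - 1 < (c:ℝ) := Int.sub_one_lt_floor _
  have hkey : (p:ℝ) * (v - u) / 3 ≤ ((c + 1 - a : ℤ) : ℝ) := by
    push_cast
    nlinarith [hpε, hpvu]
  calc (p:ℝ) * (v - u) / 3 ≤ ((c + 1 - a : ℤ) : ℝ) := hkey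
    _ ≤ ((c + 1 - a).toNat : ℝ) := by exact_mod_cast Int.self_le_toNat _
    _ = ((Set.Icc a c).ncard : ℝ) := by rw [hIcc_ncard]
    _ ≤ (Nat.card T : ℝ) := by exact_mod_cast hcard
end
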